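/- Let X be an h-special quasi-projective variety, S a quasi-projective variety, and p : X → S a dominant morphism. Then S is h-special. -/

import Mathlib

noncomputable section

/- We model (quasi-projective) varieties as subsets `X ⊆ ℂ^N`; entire curves in `X` are
holomorphic maps `ℂ → ℂ^N` with range in `X`; Zariski closed subsets of `ℂ^N` are common
zero loci of multivariate polynomials. -/

/-- Zariski closed subsets of `ℂ^N`. -/
def ZClosedA {N : ℕ} (s : Set (Fin N → ℂ)) : Prop :=
  ∃ I : Set (MvPolynomial (Fin N) ℂ), s = {x | ∀ p ∈ I, MvPolynomial.eval x p = 0}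

/-- The Zariski closure of a subset of `ℂ^N`. -/
def ZClosureA {N : ℕ} (s : Set (Fin N → ℂ)) : Set (Fin N → ℂ) :=
  ⋂₀ {t | ZClosedA t ∧ s ⊆ t}

/-- `f : ℂ → ℂ^N` is an entire curve in `X`. -/
def IsEntireCurveIn {N : ℕ} (X : Set (Fin N → ℂ)) (f : ℂ → (Fin N → ℂ)) : Prop :=
  Differentiable ℂ f ∧ Set.range f ⊆ X

/-- `x ∼ y`: the points `x, y ∈ X` are connected by a chain of Zariski closures of entire
curves `f₁, …, f_{l+1}` in `X`: `x ∈ Z₁`, `Z_i ∩ Z_{i+1} ≠ ∅`, `y ∈ Z_{l+1}` where `Z_i`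
is the Zariski closure of `f_i(ℂ)` in `X`. -/
def hChain {N : ℕ} (X : Set (Fin N → ℂ)) (x y : Fin N → ℂ) : Prop :=
  ∃ (l : ℕ) (f : Fin (l + 1) → ℂ → (Fin N → ℂ)),
    (∀ i, IsEntireCurveIn X (f i)) ∧
    x ∈ ZClosureA (Set.range (f 0)) ∩ X ∧
    y ∈ ZClosureA (Set.range (f (Fin.last l))) ∩ X ∧
    ∀ i : Fin l,
      ((ZClosureA (Set.range (f i.castSucc)) ∩ X) ∩
        (ZClosureA (Set.range (f i.succ)) ∩ X)).Nonempty

/-- Zariski closed subsets of `ℂ^N × ℂ^N`. -/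
def ZClosedP {N : ℕ} (s : Set ((Fin N → ℂ) × (Fin N → ℂ))) : Prop :=
  ∃ I : Set (MvPolynomial (Fin N ⊕ Fin N) ℂ),
    s = {xy | ∀ p ∈ I, MvPolynomial.eval (Sum.elim xy.1 xy.2) p = 0}

/-- The Zariski closure in `ℂ^N × ℂ^N`. -/
def ZClosureP {N : ℕ} (s : Set ((Fin N → ℂ) × (Fin N → ℂ))) :
    Set ((Fin N → ℂ) × (Fin N → ℂ)) :=
  ⋂₀ {t | ZClosedP t ∧ s ⊆ t}

/-- `X` is h-special: the relation `R = {(x,y) ∈ X × X | x ∼ y}` is Zariski dense in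
`X × X`. -/
def hSpecial {N : ℕ} (X : Set (Fin N → ℂ)) : Prop :=
  X ×ˢ X ⊆ ZClosureP {p | p.1 ∈ X ∧ p.2 ∈ X ∧ hChain X p.1 p.2}


open MvPolynomial in
private lemma eval_aeval_comp {σ τ : Type*} (g : σ → MvPolynomial τ ℂ) (x : τ → ℂ)
    (q : MvPolynomial σ ℂ) :
    MvPolynomial.eval x (MvPolynomial.aeval g q) =
      MvPolynomial.eval (fun j => MvPolynomial.eval x (g j)) q := by
  induction q using MvPolynomial.induction_on with
  | C a => simp
  | add p q hp hq => simp only [map_add, hp, hq]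
  | mul_X p j hp => simp only [map_mul, hp, aeval_X, eval_X]

private lemma subset_zclosureA {N : ℕ} (s : Set (Fin N → ℂ)) : s ⊆ ZClosureA s :=
  fun _ hx => Set.mem_sInter.2 fun _ ht => ht.2 hx

private lemma zclosureA_min {N : ℕ} {s t : Set (Fin N → ℂ)} (ht : ZClosedA t) (h : s ⊆ t) :
    ZClosureA s ⊆ t := fun _ hx => Set.mem_sInter.1 hx t ⟨ht, h⟩

private lemma zclosureP_min {N : ℕ} {s t : Set ((Fin N → ℂ) × (Fin N → ℂ))}
    (ht : ZClosedP t) (h : s ⊆ t) : ZClosureP s ⊆ t :=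
  fun _ hx => Set.mem_sInter.1 hx t ⟨ht, h⟩

private lemma zclosedA_preimage {N M : ℕ} (P : Fin M → MvPolynomial (Fin N) ℂ)
    {t : Set (Fin M → ℂ)} (ht : ZClosedA t) :
    ZClosedA ((fun x i => MvPolynomial.eval x (P i)) ⁻¹' t) := by
  obtain ⟨I, rfl⟩ := ht
  refine ⟨MvPolynomial.aeval P '' I, ?_⟩
  ext x
  simp only [Set.mem_preimage, Set.mem_setOf_eq, Set.forall_mem_image, eval_aeval_comp]

private lemma image_zclosureA {N M : ℕ} (P : Fin M → MvPolynomial (Fin N) ℂ)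
    (s : Set (Fin N → ℂ)) :
    (fun x i => MvPolynomial.eval x (P i)) '' ZClosureA s ⊆
      ZClosureA ((fun x i => MvPolynomial.eval x (P i)) '' s) := by
  rintro _ ⟨x, hx, rfl⟩
  refine Set.mem_sInter.2 fun t ht => ?_
  exact zclosureA_min (zclosedA_preimage P ht.1) (fun y hy => ht.2 ⟨y, hy, rfl⟩) hx

open MvPolynomial in
private lemma eval_pullback {N M : ℕ} (P : Fin M → MvPolynomial (Fin N) ℂ)
    (x y : Fin N → ℂ) (q : MvPolynomial (Fin M ⊕ Fin M) ℂ) :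
    eval (Sum.elim x y)
      (aeval (Sum.elim (fun i => rename Sum.inl (P i)) (fun i => rename Sum.inr (P i))) q) =
      eval (Sum.elim (fun i => eval x (P i)) (fun i => eval y (P i))) q := by
  rw [eval_aeval_comp]
  have h : (fun j => eval (Sum.elim x y)
      (Sum.elim (fun i => rename Sum.inl (P i)) (fun i => rename Sum.inr (P i)) j)) =
      Sum.elim (fun i => eval x (P i)) (fun i => eval y (P i)) := by
    funext j; cases j <;> simp [eval_rename]
  rw [h]

private lemma zclosedP_preimage {N M : ℕ} (P : Fin M → MvPolynomial (Fin N) ℂ)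
    {t : Set ((Fin M → ℂ) × (Fin M → ℂ))} (ht : ZClosedP t) :
    ZClosedP ((fun xy : (Fin N → ℂ) × (Fin N → ℂ) =>
      ((fun i => MvPolynomial.eval xy.1 (P i)), (fun i => MvPolynomial.eval xy.2 (P i)))) ⁻¹' t) := by
  obtain ⟨I, rfl⟩ := ht
  refine ⟨MvPolynomial.aeval (Sum.elim (fun i => MvPolynomial.rename Sum.inl (P i))
      (fun i => MvPolynomial.rename Sum.inr (P i))) '' I, ?_⟩
  ext xy
  simp only [Set.mem_preimage, Set.mem_setOf_eq, Set.forall_mem_image, eval_pullback]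

open MvPolynomial in
private lemma eval_sectionL {M : ℕ} (a y : Fin M → ℂ) (q : MvPolynomial (Fin M ⊕ Fin M) ℂ) :
    eval y (aeval (Sum.elim (fun i => (C (a i) : MvPolynomial (Fin M) ℂ)) X) q) =
      eval (Sum.elim a y) q := by
  rw [eval_aeval_comp]
  have h : (fun j => eval y (Sum.elim (fun i => (C (a i) : MvPolynomial (Fin M) ℂ)) X j)) =
      Sum.elim a y := by
    funext j; cases j <;> simp
  rw [h]

open MvPolynomial in
private lemma eval_sectionR {M : ℕ} (a x : Fin M → ℂ) (q : MvPolynomial (Fin M ⊕ Fin M) ℂ) :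
    eval x (aeval (Sum.elim X (fun i => (C (a i) : MvPolynomial (Fin M) ℂ))) q) =
      eval (Sum.elim x a) q := by
  rw [eval_aeval_comp]
  have h : (fun j => eval x (Sum.elim X (fun i => (C (a i) : MvPolynomial (Fin M) ℂ)) j)) =
      Sum.elim x a := by
    funext j; cases j <;> simp
  rw [h]

private lemma zclosedA_sectionL {M : ℕ} {t : Set ((Fin M → ℂ) × (Fin M → ℂ))}
    (ht : ZClosedP t) (a : Fin M → ℂ) : ZClosedA {y | (a, y) ∈ t} := by
  obtain ⟨I, rfl⟩ := ht
  refine ⟨MvPolynomial.aeval (Sum.elim (fun i => MvPolynomial.C (a i)) MvPolynomial.X) '' I, ?_⟩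
  ext y
  simp only [Set.mem_setOf_eq, Set.forall_mem_image, eval_sectionL]

private lemma zclosedA_sectionR {M : ℕ} {t : Set ((Fin M → ℂ) × (Fin M → ℂ))}
    (ht : ZClosedP t) (a : Fin M → ℂ) : ZClosedA {x | (x, a) ∈ t} := by
  obtain ⟨I, rfl⟩ := ht
  refine ⟨MvPolynomial.aeval (Sum.elim MvPolynomial.X (fun i => MvPolynomial.C (a i))) '' I, ?_⟩
  ext x
  simp only [Set.mem_setOf_eq, Set.forall_mem_image, eval_sectionR]

private lemma diff_eval {N : ℕ} {f : ℂ → Fin N → ℂ} (hf : Differentiable ℂ f)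
    (q : MvPolynomial (Fin N) ℂ) :
    Differentiable ℂ fun z => MvPolynomial.eval (f z) q := by
  induction q using MvPolynomial.induction_on with
  | C a => simpa using differentiable_const a
  | add p q hp hq => simp only [map_add]; exact hp.add hq
  | mul_X p j hp => simp only [map_mul, MvPolynomial.eval_X]; exact hp.mul (differentiable_pi.mp hf j)

private lemma hChain_map {N M : ℕ} (P : Fin M → MvPolynomial (Fin N) ℂ)
    {X : Set (Fin N → ℂ)} {S : Set (Fin M → ℂ)}
    (hmaps : Set.MapsTo (fun x i => MvPolynomial.eval x (P i)) X S)
    {x y : Fin N → ℂ} (hc : hChain X x y) :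
    hChain S ((fun x i => MvPolynomial.eval x (P i)) x)
      ((fun x i => MvPolynomial.eval x (P i)) y) := by
  set pm : (Fin N → ℂ) → (Fin M → ℂ) := fun x i => MvPolynomial.eval x (P i) with hpm
  obtain ⟨l, f, hf, hx, hy, hlink⟩ := hc
  have key : ∀ (g : ℂ → (Fin N → ℂ)) (x' : Fin N → ℂ),
      x' ∈ ZClosureA (Set.range g) ∩ X → pm x' ∈ ZClosureA (Set.range (pm ∘ g)) ∩ S := by
    rintro g x' ⟨h1, h2⟩
    refine ⟨?_, hmaps h2⟩
    have h3 : pm x' ∈ ZClosureA (pm '' Set.range g) :=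
      image_zclosureA P (Set.range g) ⟨x', h1, rfl⟩
    rwa [Set.range_comp]
  refine ⟨l, fun i => pm ∘ f i, fun i => ⟨?_, ?_⟩, key _ _ hx, key _ _ hy, fun i => ?_⟩
  · exact differentiable_pi.mpr fun j => diff_eval (hf i).1 (P j)
  · rw [Set.range_comp]
    exact (Set.image_mono (hf i).2).trans (Set.image_subset_iff.mpr hmaps)
  · obtain ⟨z, hz1, hz2⟩ := hlink i
    exact ⟨pm z, key _ _ hz1, key _ _ hz2⟩

/- **Statement 13.** Let `X` be an h-special quasi-projective variety, `S` a
quasi-projective variety and `p : X → S` a dominant morphism. Then `S` is h-special. -/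
theorem hSpecial_of_dominant_image {N M : ℕ}
    (X : Set (Fin N → ℂ)) (S : Set (Fin M → ℂ))
    (p : (Fin N → ℂ) → (Fin M → ℂ))
    (halg : ∃ P : Fin M → MvPolynomial (Fin N) ℂ,
      ∀ x, p x = fun i => MvPolynomial.eval x (P i))
    (hmaps : Set.MapsTo p X S)
    (hdom : S ⊆ ZClosureA (p '' X))
    (hX : hSpecial X) :
    hSpecial S := by
  obtain ⟨P, hP⟩ := halg
  have hpeq : p = fun x i => MvPolynomial.eval x (P i) := funext hP
  subst hpeq
  intro st hst
  refine Set.mem_sInter.2 fun T hT => ?_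
  obtain ⟨hTc, hTsub⟩ := hT
  -- the product X × X maps into T
  have hXX : ∀ x ∈ X, ∀ y ∈ X,
      ((fun i => MvPolynomial.eval x (P i)), (fun i => MvPolynomial.eval y (P i))) ∈ T := by
    have hRsub : {xy : (Fin N → ℂ) × (Fin N → ℂ) | xy.1 ∈ X ∧ xy.2 ∈ X ∧ hChain X xy.1 xy.2} ⊆
        (fun xy : (Fin N → ℂ) × (Fin N → ℂ) =>
          ((fun i => MvPolynomial.eval xy.1 (P i)), (fun i => MvPolynomial.eval xy.2 (P i)))) ⁻¹' T := by
      rintro xy ⟨h1, h2, h3⟩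
      exact hTsub ⟨hmaps h1, hmaps h2, hChain_map P hmaps h3⟩
    have hclosed := zclosedP_preimage P (t := T) hTc
    have hsub := zclosureP_min hclosed hRsub
    intro x hx y hy
    have h1 : (x, y) ∈ ZClosureP {xy : (Fin N → ℂ) × (Fin N → ℂ) |
        xy.1 ∈ X ∧ xy.2 ∈ X ∧ hChain X xy.1 xy.2} := hX (Set.mk_mem_prod hx hy)
    have h2 := hsub h1
    rw [Set.mem_preimage] at h2
    exact h2
  have hs : st.1 ∈ S := hst.1
  have ht2 : st.2 ∈ S := hst.2
  have step1 : ∀ a ∈ (fun x i => MvPolynomial.eval x (P i)) '' X, (a, st.2) ∈ T := by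
    rintro _ ⟨x, hxX, rfl⟩
    have hcl : ZClosedA {y | ((fun i => MvPolynomial.eval x (P i)), y) ∈ T} :=
      zclosedA_sectionL hTc _
    have hsub : (fun x i => MvPolynomial.eval x (P i)) '' X ⊆
        {y | ((fun i => MvPolynomial.eval x (P i)), y) ∈ T} := by
      rintro _ ⟨y, hyX, rfl⟩
      exact hXX x hxX y hyX
    exact zclosureA_min hcl hsub (hdom ht2)
  have hcl2 : ZClosedA {x | (x, st.2) ∈ T} := zclosedA_sectionR hTc st.2
  exact zclosureA_min hcl2 step1 (hdom hs)
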